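/- Assume the curve convention: a > 0 and y : [−a,a] → ℝ² is C⁴ with θ⃗·y′(θ) = 0, θ⃗⊥·y′(θ) < 0, θ⃗·y″(θ) > 0 for all θ ∈ [−a,a]. Let A₁ : [−a,a] → (−π/2, π/2) be C¹ with A₁(0) = 0 and (cos A₁(θ), sin A₁(θ))·(y(θ) − y(0)) = 0 for all θ. Then there exist a′ ∈ (0,a], δ ∈ (0,1), and constants c₂ ≥ c₁ > 0 and c′ > 1 such that for every θ ∈ [−a′,a′] and every α ≠ 0 with |A₁(θ) − α| ≤ δ|α|, one has: θ/α ≥ c′; c₁ ≤ ((cos α, sin α)·y′(θ))/α ≤ c₂; and c₁ ≤ −((−sin α, cos α)·(y(θ) − y(0)))/θ ≤ c₂. -/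

import Mathlib

open Real Set Filter Topology

private lemma aux_fst {f : ℝ → ℝ × ℝ} {v : ℝ × ℝ} {t : ℝ} (h : HasDerivAt f v t) :
    HasDerivAt (fun s => (f s).1) v.1 t := by
  simpa using h.hasFDerivAt.fst.hasDerivAt

private lemma aux_snd {f : ℝ → ℝ × ℝ} {v : ℝ × ℝ} {t : ℝ} (h : HasDerivAt f v t) :
    HasDerivAt (fun s => (f s).2) v.2 t := by
  simpa using h.hasFDerivAt.snd.hasDerivAt

private lemma aux_ratio (d1 d2 t : ℝ) (ht : t ≠ 0) :
    -(d1 / t ^ 2 / (d2 / t)) = -(d1 / d2) / t := by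
  rcases eq_or_ne d2 0 with h | h
  · simp [h]
  · field_simp

private lemma arith2 (b c p r s q : ℝ) (hb : 0 < b) (hc1 : 99/100 ≤ c) (hc2 : c ≤ 1)
    (hp1 : 9/10*b ≤ p) (hp2 : p ≤ 11/10*b) (hr1 : 17/10 ≤ r) (hr2 : r ≤ 7/3)
    (hs1 : 99/100 ≤ s) (hs2 : s ≤ 1) (hq1 : -(11/10*b) ≤ q) (hq2 : q ≤ -(9/10*b)) :
    b/4 ≤ c*p*r + s*q ∧ c*p*r + s*q ≤ 3*b := by
  have hp0 : 0 < p := by nlinarith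
  have hcp1 : 99/100*(9/10*b) ≤ c*p := by nlinarith
  have hcp2 : c*p ≤ 11/10*b := by nlinarith
  have h1 : 99/100*(9/10*b)*(17/10) ≤ c*p*r := by nlinarith
  have h2 : c*p*r ≤ 11/10*b*(7/3) := by nlinarith
  have h3 : -(11/10*b) ≤ s*q := by nlinarith
  have h4 : s*q ≤ 99/100*(-(9/10*b)) := by nlinarith
  constructor <;> nlinarith

private lemma arith3 (b c m z w : ℝ) (hb : 0 < b) (hc1 : 99/100 ≤ c) (hc2 : c ≤ 1)
    (hm : |m| ≤ 11/1000) (hz : |z| ≤ 1/100*b) (hw1 : -(11/10*b) ≤ w) (hw2 : w ≤ -(9/10*b)) :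
    b/4 ≤ m*z - c*w ∧ m*z - c*w ≤ 3*b := by
  obtain ⟨hm1, hm2⟩ := abs_le.mp hm
  obtain ⟨hz1, hz2⟩ := abs_le.mp hz
  have h1 : -(11/1000*(1/100*b)) ≤ m*z := by nlinarith
  have h2 : m*z ≤ 11/1000*(1/100*b) := by nlinarith
  have h3 : 99/100*(9/10*b) ≤ -(c*w) := by nlinarith
  have h4 : -(c*w) ≤ 11/10*b := by nlinarith
  constructor <;> nlinarith

private lemma sin_ratio_bounds {x : ℝ} (hx : 0 < x) (hx' : x ≤ 11/1000) :
    99/100 ≤ Real.sin x / x ∧ Real.sin x / x ≤ 1 := by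
  have h1 : Real.sin x < x := Real.sin_lt hx
  have h2 : x - x ^ 3 / 4 < Real.sin x := by have := Real.sin_gt_sub_cube hx; nlinarith [pow_pos hx 3]
  constructor
  · have hx2 : x^2 ≤ (11/1000)^2 := by nlinarith
    have hx3 : x*x^2 ≤ x*(11/1000)^2 := mul_le_mul_of_nonneg_left hx2 hx.le
    rw [le_div_iff₀ hx]; nlinarith [hx3]
  · rw [div_le_one hx]; linarith

private lemma sin_ratio_bounds' {x : ℝ} (hx : x ≠ 0) (hx' : |x| ≤ 11/1000) :
    99/100 ≤ Real.sin x / x ∧ Real.sin x / x ≤ 1 := by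
  rcases hx.lt_or_gt with h | h
  · have he : Real.sin x / x = Real.sin (-x) / (-x) := by rw [Real.sin_neg]; ring
    rw [he]
    exact sin_ratio_bounds (by linarith) (by rw [abs_of_neg h] at hx'; linarith)
  · exact sin_ratio_bounds h (by rw [abs_of_pos h] at hx'; linarith)

private lemma stmt3_numeric (b θ α A w1 w2 z1 z2 : ℝ) (hb : 0 < b) (hθ : θ ≠ 0) (hα : α ≠ 0)
    (ht1 : 45/100 ≤ A / θ) (ht2 : A / θ ≤ 55/100)
    (hw1 : 9/10*b ≤ w1 / θ) (hw2 : w1 / θ ≤ 11/10*b)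
    (hq1 : -(11/10*b) ≤ w2) (hq2 : w2 ≤ -(9/10*b))
    (hz1 : |z1 / θ| ≤ 1/100*b)
    (hz2a : -(11/10*b) ≤ z2 / θ) (hz2b : z2 / θ ≤ -(9/10*b))
    (hA : |A| ≤ 1/100)
    (hcon : |A - α| ≤ 1/20 * |α|) :
    17/10 ≤ θ / α ∧
    (b/4 ≤ (Real.cos α * w1 + Real.sin α * w2) / α ∧
      (Real.cos α * w1 + Real.sin α * w2) / α ≤ 3 * b) ∧
    (b/4 ≤ -(((-Real.sin α) * z1 + Real.cos α * z2) / θ) ∧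
      -(((-Real.sin α) * z1 + Real.cos α * z2) / θ) ≤ 3 * b) := by
  have hαpos : 0 < |α| := abs_pos.mpr hα
  have hAne : A ≠ 0 := by
    intro h0; rw [h0, zero_sub, abs_neg] at hcon; linarith
  have hαA : |α| ≤ 11/1000 := by
    have h1 : |α| - |A| ≤ |α - A| := abs_sub_abs_le_abs_sub α A
    rw [abs_sub_comm] at h1
    linarith
  have hAα : |A / α - 1| ≤ 1 / 20 := by
    have he : A / α - 1 = (A - α) / α := by field_simp
    rw [he, abs_div, div_le_iff₀ hαpos]
    linarith
  have hv1 : 95/100 ≤ A / α := by have := (abs_le.mp hAα).1; linarith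
  have hv2 : A / α ≤ 105/100 := by have := (abs_le.mp hAα).2; linarith
  have hre : θ / α = (A / α) / (A / θ) := by field_simp
  have hu : (0:ℝ) < A / θ := by linarith
  have hr1 : 17/10 ≤ θ / α := by rw [hre, le_div_iff₀ hu]; nlinarith
  have hr2 : θ / α ≤ 7/3 := by rw [hre, div_le_iff₀ hu]; nlinarith
  have hcos1 : 99/100 ≤ Real.cos α := by
    have h := Real.one_sub_sq_div_two_le_cos (x := α)
    have hsq : α ^ 2 ≤ (11/1000) ^ 2 := by
      rw [← sq_abs]; exact pow_le_pow_left₀ (abs_nonneg _) hαA 2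
    nlinarith
  have hcos2 : Real.cos α ≤ 1 := Real.cos_le_one α
  obtain ⟨hs1, hs2⟩ := sin_ratio_bounds' hα hαA
  have hsinabs : |Real.sin α| ≤ 11/1000 := le_trans Real.abs_sin_le_abs hαA
  refine ⟨hr1, ?_, ?_⟩
  · have key : (Real.cos α * w1 + Real.sin α * w2) / α
        = Real.cos α * (w1/θ) * (θ/α) + (Real.sin α / α) * w2 := by
      field_simp
      try ring
    rw [key]
    exact arith2 b (Real.cos α) (w1/θ) (θ/α) (Real.sin α / α) w2 hb hcos1 hcos2
      hw1 hw2 hr1 hr2 hs1 hs2 hq1 hq2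
  · have key : -(((-Real.sin α) * z1 + Real.cos α * z2) / θ)
        = Real.sin α * (z1/θ) - Real.cos α * (z2/θ) := by
      field_simp
      try ring
    rw [key]
    exact arith3 b (Real.cos α) (Real.sin α) (z1/θ) (z2/θ) hb hcos1 hcos2 hsinabs hz1 hz2a hz2b

/-- Under the curve convention, near the critical direction (`|A₁(θ) - α| ≤ δ|α|`, `α ≠ 0`)
one has `θ/α ≥ c' > 1`, `∂_θ R₁(θ,α) ≍ α` and `∂_α R₁(θ,α) ≍ -θ`. -/
theorem stmt3 (a : ℝ) (ha : 0 < a) (y : ℝ → ℝ × ℝ) (hy : ContDiff ℝ 4 y)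
    (htang : ∀ θ ∈ Icc (-a) a,
      Real.cos θ * (deriv y θ).1 + Real.sin θ * (deriv y θ).2 = 0)
    (hperp : ∀ θ ∈ Icc (-a) a,
      -Real.sin θ * (deriv y θ).1 + Real.cos θ * (deriv y θ).2 < 0)
    (hcurv : ∀ θ ∈ Icc (-a) a,
      0 < Real.cos θ * (deriv (deriv y) θ).1 + Real.sin θ * (deriv (deriv y) θ).2)
    (A₁ : ℝ → ℝ) (hA₁ : ContDiff ℝ 1 A₁)
    (hA₁mem : ∀ θ ∈ Icc (-a) a, A₁ θ ∈ Ioo (-(π / 2)) (π / 2))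
    (hA₁0 : A₁ 0 = 0)
    (hortho : ∀ θ ∈ Icc (-a) a,
      Real.cos (A₁ θ) * (y θ - y 0).1 + Real.sin (A₁ θ) * (y θ - y 0).2 = 0) :
    ∃ a' ∈ Ioc 0 a, ∃ δ ∈ Ioo (0 : ℝ) 1, ∃ c₁ c₂ c' : ℝ,
      0 < c₁ ∧ c₁ ≤ c₂ ∧ 1 < c' ∧
      ∀ θ ∈ Icc (-a') a', ∀ α : ℝ, α ≠ 0 → |A₁ θ - α| ≤ δ * |α| →
        c' ≤ θ / α ∧
        (c₁ ≤ (Real.cos α * (deriv y θ).1 + Real.sin α * (deriv y θ).2) / α ∧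
          (Real.cos α * (deriv y θ).1 + Real.sin α * (deriv y θ).2) / α ≤ c₂) ∧
        (c₁ ≤ -(((-Real.sin α) * (y θ - y 0).1 + Real.cos α * (y θ - y 0).2) / θ) ∧
          -(((-Real.sin α) * (y θ - y 0).1 + Real.cos α * (y θ - y 0).2) / θ) ≤ c₂) := by
  classical
  -- differentiability facts
  have hy4 := hy
  rw [show (4 : WithTop ℕ∞) = 3 + 1 from rfl, contDiff_succ_iff_deriv] at hy4
  have hy'3 : ContDiff ℝ 3 (deriv y) := hy4.2.2
  have hy'd : Differentiable ℝ (deriv y) := hy'3.differentiable (by norm_num)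
  have hy'c : Continuous (deriv y) := hy'd.continuous
  have hy1 : Differentiable ℝ y := hy.differentiable (by norm_num)
  have hdy : ∀ t, HasDerivAt y (deriv y t) t := fun t => (hy1 t).hasDerivAt
  have hddy : ∀ t, HasDerivAt (deriv y) (deriv (deriv y) t) t := fun t => (hy'd t).hasDerivAt
  have h0mem : (0:ℝ) ∈ Icc (-a) a := ⟨by linarith, ha.le⟩
  -- basic values at 0
  have e1 : (deriv y 0).1 = 0 := by have := htang 0 h0mem; simpa using this
  set b : ℝ := -(deriv y 0).2 with hb_def
  have hb : 0 < b := by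
    have := hperp 0 h0mem; simp at this; simp [hb_def]; linarith
  have e2 : (deriv (deriv y) 0).1 = b := by
    set F : ℝ → ℝ := fun t => Real.cos t * (deriv y t).1 + Real.sin t * (deriv y t).2 with hF_def
    have hFd : HasDerivAt F
        ((-Real.sin 0) * (deriv y 0).1 + Real.cos 0 * (deriv (deriv y) 0).1
          + (Real.cos 0 * (deriv y 0).2 + Real.sin 0 * (deriv (deriv y) 0).2)) 0 := by
      exact ((Real.hasDerivAt_cos 0).mul (aux_fst (hddy 0))).add
        ((Real.hasDerivAt_sin 0).mul (aux_snd (hddy 0)))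
    have hF0 : F =ᶠ[𝓝 (0:ℝ)] fun _ => 0 := by
      filter_upwards [Icc_mem_nhds (by linarith : -a < (0:ℝ)) ha] with t ht
      exact htang t ht
    have hF0' : HasDerivAt F 0 0 :=
      (hasDerivAt_const (0:ℝ) (0:ℝ)).congr_of_eventuallyEq hF0
    have := hF0'.unique hFd
    simp [e1] at this
    simp [hb_def]; linarith
  -- slope helper
  have hslope : ∀ (f : ℝ → ℝ) (c : ℝ), Tendsto (slope f 0) (𝓝[≠] (0:ℝ)) (𝓝 c) → f 0 = 0 →
      Tendsto (fun t => f t / t) (𝓝[≠] (0:ℝ)) (𝓝 c) := by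
    intro f c h hf0
    apply h.congr
    intro t
    rw [slope_def_field, hf0, sub_zero, sub_zero]
  have hne : ∀ᶠ t in (𝓝[≠] (0:ℝ)), t ≠ 0 := by
    filter_upwards [self_mem_nhdsWithin] with t ht using ht
  -- limits
  have Lz2 : Tendsto (fun t => (y t - y 0).2 / t) (𝓝[≠] (0:ℝ)) (𝓝 (-b)) := by
    apply hslope
    · have h : HasDerivAt (fun t => (y t - y 0).2) ((deriv y 0).2) 0 :=
        ((aux_snd (hdy 0)).sub_const ((y 0).2)).congr_of_eventuallyEq
          (Eventually.of_forall fun s => rfl)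
      have := hasDerivAt_iff_tendsto_slope.mp h
      simpa [hb_def] using this
    · simp
  have Lz1 : Tendsto (fun t => (y t - y 0).1 / t) (𝓝[≠] (0:ℝ)) (𝓝 0) := by
    apply hslope
    · have h : HasDerivAt (fun t => (y t - y 0).1) ((deriv y 0).1) 0 :=
        ((aux_fst (hdy 0)).sub_const ((y 0).1)).congr_of_eventuallyEq
          (Eventually.of_forall fun s => rfl)
      have := hasDerivAt_iff_tendsto_slope.mp h
      simpa [e1] using this
    · simp
  have Lw1 : Tendsto (fun t => (deriv y t).1 / t) (𝓝[≠] (0:ℝ)) (𝓝 b) := by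
    apply hslope
    · have := hasDerivAt_iff_tendsto_slope.mp (aux_fst (hddy 0))
      simpa [e2] using this
    · exact e1
  have Lq : Tendsto (fun t => (deriv y t).2) (𝓝[≠] (0:ℝ)) (𝓝 (-b)) := by
    have : Tendsto (fun t => (deriv y t).2) (𝓝 (0:ℝ)) (𝓝 ((deriv y 0).2)) :=
      ((continuous_snd.comp hy'c).tendsto 0)
    have := this.mono_left (nhdsWithin_le_nhds (s := {(0:ℝ)}ᶜ))
    simpa [hb_def] using this
  have LA0 : Tendsto A₁ (𝓝[≠] (0:ℝ)) (𝓝 0) := by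
    have : Tendsto A₁ (𝓝 (0:ℝ)) (𝓝 (A₁ 0)) := hA₁.continuous.tendsto 0
    rw [hA₁0] at this
    exact this.mono_left (nhdsWithin_le_nhds (s := {(0:ℝ)}ᶜ))
  -- second order limit via L'Hopital
  have Lsq : Tendsto (fun t => (y t - y 0).1 / t^2) (𝓝[≠] (0:ℝ)) (𝓝 (b/2)) := by
    apply HasDerivAt.lhopital_zero_nhdsNE (f' := fun t => (deriv y t).1) (g' := fun t => 2*t)
    · filter_upwards with t
      exact ((aux_fst (hdy t)).sub_const ((y 0).1)).congr_of_eventuallyEq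
        (Eventually.of_forall fun s => rfl)
    · filter_upwards with t
      simpa using hasDerivAt_pow 2 t
    · filter_upwards [hne] with t ht
      intro h; apply ht; linarith [h]
    · have : Tendsto (fun t => (y t - y 0).1) (𝓝 (0:ℝ)) (𝓝 ((y 0 - y 0).1)) :=
        (continuous_fst.comp (hy1.continuous.sub continuous_const)).tendsto 0
      simp at this
      exact this.mono_left (nhdsWithin_le_nhds (s := {(0:ℝ)}ᶜ))
    · have : Tendsto (fun t : ℝ => t^2) (𝓝 (0:ℝ)) (𝓝 ((0:ℝ)^2)) :=
        (continuous_pow 2).tendsto 0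
      simp at this
      exact this.mono_left (nhdsWithin_le_nhds (s := {(0:ℝ)}ᶜ))
    · have : Tendsto (fun t => ((deriv y t).1 / t) / 2) (𝓝[≠] (0:ℝ)) (𝓝 (b/2)) :=
        Lw1.div_const 2
      apply this.congr
      intro t
      rw [div_div, mul_comm]
  -- the chord ratio u
  set u : ℝ → ℝ := fun t => -((y t - y 0).1 / (y t - y 0).2) with hu_def
  have Luθ : Tendsto (fun t => u t / t) (𝓝[≠] (0:ℝ)) (𝓝 (1/2)) := by
    have h1 : Tendsto (fun t => -(((y t - y 0).1 / t^2) / ((y t - y 0).2 / t)))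
        (𝓝[≠] (0:ℝ)) (𝓝 (-((b/2)/(-b)))) := (Lsq.div Lz2 (by intro h; nlinarith)).neg
    have hval : -((b/2)/(-b)) = 1/2 := by
      field_simp
    rw [hval] at h1
    apply h1.congr'
    filter_upwards [hne] with t ht
    simp only [hu_def]
    exact aux_ratio _ _ _ ht
  have Lu0 : Tendsto u (𝓝[≠] (0:ℝ)) (𝓝 0) := by
    have h1 : Tendsto (fun t => (u t / t) * t) (𝓝[≠] (0:ℝ)) (𝓝 ((1/2) * 0)) :=
      Luθ.mul (tendsto_id.mono_left (nhdsWithin_le_nhds (s := {(0:ℝ)}ᶜ)))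
    simp only [mul_zero] at h1
    apply h1.congr'
    filter_upwards [hne] with t ht
    field_simp
  have hune : ∀ᶠ t in (𝓝[≠] (0:ℝ)), u t ≠ 0 := by
    have h1 : ∀ᶠ t in (𝓝[≠] (0:ℝ)), u t / t ≠ 0 := Luθ.eventually_ne (by norm_num)
    filter_upwards [h1] with t ht
    intro h; apply ht; simp [h]
  have Luu : Tendsto u (𝓝[≠] (0:ℝ)) (𝓝[≠] (0:ℝ)) := by
    rw [tendsto_nhdsWithin_iff]
    exact ⟨Lu0, by filter_upwards [hune] with t ht using ht⟩
  -- A₁ t = arctan (u t) eventually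
  have hz2ne : ∀ᶠ t in (𝓝[≠] (0:ℝ)), (y t - y 0).2 ≠ 0 := by
    have h1 : ∀ᶠ t in (𝓝[≠] (0:ℝ)), (y t - y 0).2 / t ≠ 0 :=
      Lz2.eventually_ne (by intro h; nlinarith)
    filter_upwards [h1] with t ht
    intro h; apply ht; simp [h]
  have hIcc : ∀ᶠ t in (𝓝[≠] (0:ℝ)), t ∈ Icc (-a) a := by
    apply eventually_nhdsWithin_of_eventually_nhds
    filter_upwards [Icc_mem_nhds (by linarith : -a < (0:ℝ)) ha] with t ht using ht
  have hAtan : ∀ᶠ t in (𝓝[≠] (0:ℝ)), A₁ t = Real.arctan (u t) := by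
    filter_upwards [hz2ne, hIcc] with t hz2 hIc
    have hmem := hA₁mem t hIc
    have hcosA : Real.cos (A₁ t) ≠ 0 :=
      (Real.cos_pos_of_mem_Ioo hmem).ne'
    have horth := hortho t hIc
    have htan : Real.tan (A₁ t) = u t := by
      rw [Real.tan_eq_sin_div_cos]
      simp only [hu_def]
      rw [show -((y t - y 0).1 / (y t - y 0).2) = (-(y t - y 0).1) / (y t - y 0).2 by
        rw [neg_div], div_eq_div_iff hcosA hz2]
      linarith
    rw [← htan, Real.arctan_tan hmem.1 hmem.2]
  have Larc : Tendsto (fun v => Real.arctan v / v) (𝓝[≠] (0:ℝ)) (𝓝 1) := by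
    have h := hasDerivAt_iff_tendsto_slope.mp (Real.hasDerivAt_arctan 0)
    have h2 : Tendsto (slope Real.arctan 0) (𝓝[≠] (0:ℝ)) (𝓝 1) := by
      simpa using h
    apply h2.congr
    intro v
    rw [slope_def_field, Real.arctan_zero, sub_zero, sub_zero]
  have LAslope : Tendsto (fun t => A₁ t / t) (𝓝[≠] (0:ℝ)) (𝓝 (1/2)) := by
    have h1 : Tendsto (fun t => (Real.arctan (u t) / u t) * (u t / t))
        (𝓝[≠] (0:ℝ)) (𝓝 (1 * (1/2))) := (Larc.comp Luu).mul Luθ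
    simp only [one_mul] at h1
    apply h1.congr'
    filter_upwards [hune, hne, hAtan] with t hu0 ht0 hAt
    rw [hAt]
    field_simp
  -- eventual interval bounds
  have E1a : ∀ᶠ t in (𝓝[≠] (0:ℝ)), 45/100 ≤ A₁ t / t :=
    LAslope.eventually_const_le (by norm_num)
  have E1b : ∀ᶠ t in (𝓝[≠] (0:ℝ)), A₁ t / t ≤ 55/100 :=
    LAslope.eventually_le_const (by norm_num)
  have E2a : ∀ᶠ t in (𝓝[≠] (0:ℝ)), 9/10*b ≤ (deriv y t).1 / t :=
    Lw1.eventually_const_le (by nlinarith)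
  have E2b : ∀ᶠ t in (𝓝[≠] (0:ℝ)), (deriv y t).1 / t ≤ 11/10*b :=
    Lw1.eventually_le_const (by nlinarith)
  have E3a : ∀ᶠ t in (𝓝[≠] (0:ℝ)), -(11/10*b) ≤ (deriv y t).2 :=
    Lq.eventually_const_le (by nlinarith)
  have E3b : ∀ᶠ t in (𝓝[≠] (0:ℝ)), (deriv y t).2 ≤ -(9/10*b) :=
    Lq.eventually_le_const (by nlinarith)
  have E4 : ∀ᶠ t in (𝓝[≠] (0:ℝ)), |(y t - y 0).1 / t| ≤ 1/100*b := by
    have h := Lz1.abs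
    simp only [abs_zero] at h
    exact h.eventually_le_const (by nlinarith)
  have E5a : ∀ᶠ t in (𝓝[≠] (0:ℝ)), -(11/10*b) ≤ (y t - y 0).2 / t :=
    Lz2.eventually_const_le (by nlinarith)
  have E5b : ∀ᶠ t in (𝓝[≠] (0:ℝ)), (y t - y 0).2 / t ≤ -(9/10*b) :=
    Lz2.eventually_le_const (by nlinarith)
  have E6 : ∀ᶠ t in (𝓝[≠] (0:ℝ)), |A₁ t| ≤ 1/100 := by
    have h := LA0.abs
    simp only [abs_zero] at h
    exact h.eventually_le_const (by norm_num)
  have Hfin : ∀ᶠ t in (𝓝[≠] (0:ℝ)),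
      (45/100 ≤ A₁ t / t ∧ A₁ t / t ≤ 55/100) ∧
      (9/10*b ≤ (deriv y t).1 / t ∧ (deriv y t).1 / t ≤ 11/10*b) ∧
      (-(11/10*b) ≤ (deriv y t).2 ∧ (deriv y t).2 ≤ -(9/10*b)) ∧
      |(y t - y 0).1 / t| ≤ 1/100*b ∧
      (-(11/10*b) ≤ (y t - y 0).2 / t ∧ (y t - y 0).2 / t ≤ -(9/10*b)) ∧
      |A₁ t| ≤ 1/100 := by
    filter_upwards [E1a, E1b, E2a, E2b, E3a, E3b, E4, E5a, E5b, E6] with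
      t h1 h2 h3 h4 h5 h6 h7 h8 h9 h10
    exact ⟨⟨h1, h2⟩, ⟨h3, h4⟩, ⟨h5, h6⟩, h7, ⟨h8, h9⟩, h10⟩
  -- extract a radius
  rw [eventually_nhdsWithin_iff, Metric.eventually_nhds_iff] at Hfin
  obtain ⟨ε, hε, hball⟩ := Hfin
  refine ⟨min (ε/2) a, ⟨lt_min (by linarith) ha, min_le_right _ _⟩,
    1/20, by norm_num, b/4, 3*b, 17/10, by linarith, by linarith, by norm_num, ?_⟩
  intro θ hθ α hα hcon
  have hθ0 : θ ≠ 0 := by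
    intro h0
    rw [h0, hA₁0, zero_sub, abs_neg] at hcon
    have : 0 < |α| := abs_pos.mpr hα
    linarith
  have hθd : dist θ 0 < ε := by
    rw [Real.dist_eq, sub_zero]
    have h1 : |θ| ≤ min (ε/2) a := abs_le.mpr ⟨hθ.1, hθ.2⟩
    have h2 : min (ε/2) a ≤ ε/2 := min_le_left _ _
    linarith
  obtain ⟨⟨h1, h2⟩, ⟨h3, h4⟩, ⟨h5, h6⟩, h7, ⟨h8, h9⟩, h10⟩ := hball hθd hθ0
  exact stmt3_numeric b θ α (A₁ θ) ((deriv y θ).1) ((deriv y θ).2)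
    ((y θ - y 0).1) ((y θ - y 0).2) hb hθ0 hα h1 h2 h3 h4 h5 h6 h7 h8 h9 h10 hcon
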